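/- For m, n ≥ 2 and k ≥ 2, the fraction of row-aperiodic (m,n)-patterns over a k-letter alphabet tends to 1 as m → ∞ (with n, k fixed), as n → ∞ (with m, k fixed), and as k → ∞ (with m, n fixed). -/

import Mathlib

open Finset Filter

/-- The fraction `ap(m,n,k) = m·M(k^n, m)/k^(mn)` of row-aperiodic `(m,n)`-patterns over a
`k`-letter alphabet, where `M` is the necklace polynomial. -/
noncomputable def apFrac (m n k : ℕ) : ℝ :=
  (m : ℝ) * ((∑ d ∈ m.divisors,
      (ArithmeticFunction.moebius (m / d) : ℝ) * ((k : ℝ) ^ n) ^ d) / m) / (k : ℝ) ^ (m * n)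

lemma apFrac_sub_one_abs_le (m n k : ℕ) (hm : 1 ≤ m) (hk : 1 ≤ k) :
    |apFrac m n k - 1| ≤ (m : ℝ) / ((k : ℝ) ^ n) ^ (m - m / 2) := by
  set q : ℝ := (k : ℝ) ^ n with hq
  have hk1 : (1 : ℝ) ≤ (k : ℝ) := by exact_mod_cast hk
  have hq1 : (1 : ℝ) ≤ q := one_le_pow₀ hk1
  have hq0 : (0 : ℝ) < q := lt_of_lt_of_le zero_lt_one hq1
  have hqm : (0 : ℝ) < q ^ m := pow_pos hq0 m
  have hm0 : (m : ℝ) ≠ 0 := by positivity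
  have happ : apFrac m n k =
      (∑ d ∈ m.divisors, (ArithmeticFunction.moebius (m / d) : ℝ) * q ^ d) / q ^ m := by
    rw [apFrac, mul_comm m n, pow_mul]
    congr 1
    field_simp
    rfl
  have hmem : m ∈ m.divisors := Nat.mem_divisors_self m (by omega)
  set T : ℝ := ∑ d ∈ m.divisors.erase m, (ArithmeticFunction.moebius (m / d) : ℝ) * q ^ d with hT
  have hsum : ∑ d ∈ m.divisors, (ArithmeticFunction.moebius (m / d) : ℝ) * q ^ d
      = q ^ m + T := by
    rw [← Finset.add_sum_erase _ _ hmem, Nat.div_self (by omega)]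
    simp
    rfl
  have hdiff : apFrac m n k - 1 = T / q ^ m := by
    rw [happ, hsum, add_div, div_self hqm.ne', add_sub_cancel_left]
  -- bound |T|
  have hbound : |T| ≤ (m : ℝ) * q ^ (m / 2) := by
    calc |T| ≤ ∑ d ∈ m.divisors.erase m,
        |(ArithmeticFunction.moebius (m / d) : ℝ) * q ^ d| := Finset.abs_sum_le_sum_abs _ _
      _ ≤ ∑ d ∈ m.divisors.erase m, q ^ (m / 2) := by
          apply Finset.sum_le_sum
          intro d hd
          have hd' : d ∈ m.divisors := Finset.mem_of_mem_erase hd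
          have hdm : d ∣ m := (Nat.mem_divisors.mp hd').1
          have hdne : d ≠ m := Finset.ne_of_mem_erase hd
          have hdle : d ≤ m / 2 := by
            obtain ⟨c, hc⟩ := hdm
            have hc2 : 2 ≤ c := by
              rcases Nat.lt_or_ge c 2 with h | h
              · interval_cases c <;> omega
              · exact h
            have : 2 * d ≤ m := by nlinarith
            omega
          have h1 : |(ArithmeticFunction.moebius (m / d) : ℝ)| ≤ 1 := by
            have := ArithmeticFunction.abs_moebius_le_one (n := m / d)
            exact_mod_cast this
          have h2 : |q ^ d| = q ^ d := abs_of_nonneg (by positivity)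
          rw [abs_mul, h2]
          calc |(ArithmeticFunction.moebius (m / d) : ℝ)| * q ^ d
              ≤ 1 * q ^ d := by
                apply mul_le_mul_of_nonneg_right h1 (by positivity)
            _ = q ^ d := one_mul _
            _ ≤ q ^ (m / 2) := pow_le_pow_right₀ hq1 hdle
      _ = ((m.divisors.erase m).card : ℝ) * q ^ (m / 2) := by rw [Finset.sum_const, nsmul_eq_mul]
      _ ≤ (m : ℝ) * q ^ (m / 2) := by
          apply mul_le_mul_of_nonneg_right _ (by positivity)
          have h1 : (m.divisors.erase m).card ≤ m.divisors.card := Finset.card_erase_le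
          have h2 : m.divisors.card ≤ m := by
            have : m.divisors.card ≤ (Finset.Ico 1 (m + 1)).card := by
              apply Finset.card_le_card
              intro x hx
              have := Nat.mem_divisors.mp hx
              have hxm : x ∣ m := this.1
              have hxle : x ≤ m := Nat.le_of_dvd (by omega) hxm
              have hx0 : 1 ≤ x := Nat.pos_of_dvd_of_pos hxm (by omega)
              simp [Finset.mem_Ico]; omega
            simpa using this
          exact_mod_cast h1.trans h2
  rw [hdiff, abs_div, abs_of_pos hqm]
  have hsplit : q ^ m = q ^ (m - m / 2) * q ^ (m / 2) := by
    rw [← pow_add]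
    congr 1
    omega
  rw [hsplit]
  rw [div_le_div_iff₀ (by positivity) (by positivity)]
  calc |T| * q ^ (m - m / 2) ≤ ((m : ℝ) * q ^ (m / 2)) * q ^ (m - m / 2) := by
        apply mul_le_mul_of_nonneg_right hbound (by positivity)
    _ = (m : ℝ) * (q ^ (m - m / 2) * q ^ (m / 2)) := by ring

/-- For `m, n, k ≥ 2`, the fraction of row-aperiodic `(m,n)`-patterns tends to `1` as
`m → ∞` (with `n,k` fixed), as `n → ∞` (with `m,k` fixed), and as `k → ∞` (with `m,n`
fixed). -/
theorem apFrac_tendsto_one (m n k : ℕ) (hm : 2 ≤ m) (hn : 2 ≤ n) (hk : 2 ≤ k) :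
    Tendsto (fun m' => apFrac m' n k) atTop (nhds 1) ∧
    Tendsto (fun n' => apFrac m n' k) atTop (nhds 1) ∧
    Tendsto (fun k' => apFrac m n k') atTop (nhds 1) := by
  have hk1 : (2 : ℝ) ≤ (k : ℝ) := by exact_mod_cast hk
  have hkpos : (0 : ℝ) < (k : ℝ) := by linarith
  refine ⟨?_, ?_, ?_⟩
  · -- m → ∞
    have h0 : Tendsto (fun m' : ℕ => apFrac m' n k - 1) atTop (nhds 0) := by
      apply squeeze_zero_norm' (a := fun m' : ℕ => (m' : ℝ) * (1/2 : ℝ) ^ m')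
      · filter_upwards [eventually_ge_atTop 1] with m' hm'
        have key := apFrac_sub_one_abs_le m' n k hm' (by omega)
        have h4 : (4 : ℝ) ≤ (k : ℝ) ^ n := by
          calc (4 : ℝ) = 2 ^ 2 := by norm_num
            _ ≤ (k : ℝ) ^ 2 := by gcongr
            _ ≤ (k : ℝ) ^ n := pow_le_pow_right₀ (by linarith) hn
        have hden : (2 : ℝ) ^ m' ≤ ((k : ℝ) ^ n) ^ (m' - m' / 2) := by
          calc (2 : ℝ) ^ m' ≤ (2 : ℝ) ^ (2 * (m' - m' / 2)) :=
                pow_le_pow_right₀ one_le_two (by omega)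
            _ = (4 : ℝ) ^ (m' - m' / 2) := by rw [pow_mul]; norm_num
            _ ≤ ((k : ℝ) ^ n) ^ (m' - m' / 2) := by gcongr
        have : |apFrac m' n k - 1| ≤ (m' : ℝ) / 2 ^ m' := by
          refine key.trans ?_
          gcongr
        simpa [Real.norm_eq_abs, div_eq_mul_inv, inv_pow] using this
      · exact tendsto_self_mul_const_pow_of_lt_one (by norm_num) (by norm_num)
    have := h0.add (tendsto_const_nhds (x := (1 : ℝ)))
    simpa using this
  · -- n → ∞
    have h0 : Tendsto (fun n' : ℕ => apFrac m n' k - 1) atTop (nhds 0) := by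
      apply squeeze_zero_norm' (a := fun n' : ℕ => (m : ℝ) / (k : ℝ) ^ n')
      · filter_upwards with n'
        have key := apFrac_sub_one_abs_le m n' k (by omega) (by omega)
        have hq1 : (1 : ℝ) ≤ (k : ℝ) ^ n' := one_le_pow₀ (by linarith)
        have hden : (k : ℝ) ^ n' ≤ ((k : ℝ) ^ n') ^ (m - m / 2) := by
          calc (k : ℝ) ^ n' = ((k : ℝ) ^ n') ^ 1 := (pow_one _).symm
            _ ≤ ((k : ℝ) ^ n') ^ (m - m / 2) := pow_le_pow_right₀ hq1 (by omega)
        refine key.trans ?_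
        gcongr
      · exact Tendsto.div_atTop tendsto_const_nhds
          (tendsto_pow_atTop_atTop_of_one_lt (by linarith))
    have := h0.add (tendsto_const_nhds (x := (1 : ℝ)))
    simpa using this
  · -- k → ∞
    have h0 : Tendsto (fun k' : ℕ => apFrac m n k' - 1) atTop (nhds 0) := by
      apply squeeze_zero_norm' (a := fun k' : ℕ => (m : ℝ) / (k' : ℝ) ^ n)
      · filter_upwards [eventually_ge_atTop 1] with k' hk'
        have key := apFrac_sub_one_abs_le m n k' (by omega) hk'
        have hk1' : (1 : ℝ) ≤ (k' : ℝ) := by exact_mod_cast hk'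
        have hq1 : (1 : ℝ) ≤ (k' : ℝ) ^ n := one_le_pow₀ hk1'
        have hden : (k' : ℝ) ^ n ≤ ((k' : ℝ) ^ n) ^ (m - m / 2) := by
          calc (k' : ℝ) ^ n = ((k' : ℝ) ^ n) ^ 1 := (pow_one _).symm
            _ ≤ ((k' : ℝ) ^ n) ^ (m - m / 2) := pow_le_pow_right₀ hq1 (by omega)
        refine key.trans ?_
        gcongr
      · refine Tendsto.div_atTop tendsto_const_nhds ?_
        exact (tendsto_pow_atTop (by omega)).comp tendsto_natCast_atTop_atTop
    have := h0.add (tendsto_const_nhds (x := (1 : ℝ)))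
    simpa using this
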